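/- Every subgraph of the book graph $B_{s,t}$, after performing any single elementary operation (vertex deletion, edge deletion, or edge contraction), is isomorphic to a subgraph of $B_{s,t}$. Consequently, every minor of $B_{s,t}$ is isomorphic to a subgraph of $B_{s,t}$. -/

import Mathlib

/-- `G` contains `H` as a minor. -/
def SimpleGraph.HasMinor {V : Type*} {W : Type*} (G : SimpleGraph V) (H : SimpleGraph W) :
    Prop :=
  ∃ f : W → Set V,
    (∀ w, (f w).Nonempty) ∧
    (∀ w, (G.induce (f w)).Connected) ∧
    (Pairwise fun w₁ w₂ => Disjoint (f w₁) (f w₂)) ∧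
    (∀ ⦃w₁ w₂⦄, H.Adj w₁ w₂ → ∃ v₁ ∈ f w₁, ∃ v₂ ∈ f w₂, G.Adj v₁ v₂)

/-- The book graph `B_{s,t}`: the join of a clique on `s` vertices with an independent set
of `t` vertices. -/
def book (s t : ℕ) : SimpleGraph (Fin s ⊕ Fin t) where
  Adj a b := a ≠ b ∧ (a.isLeft ∨ b.isLeft)
  symm := by refine ⟨?_⟩; rintro a b ⟨h1, h2⟩; exact ⟨h1.symm, h2.symm⟩
  loopless := by refine ⟨?_⟩; rintro a ⟨h, _⟩; exact h rfl

/-- `H` is isomorphic to a subgraph of the book `B_{s,t}`. -/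
def IsSubBook (s t : ℕ) {U : Type*} (H : SimpleGraph U) : Prop :=
  ∃ f : U ↪ (Fin s ⊕ Fin t), ∀ a b : U, H.Adj a b → (book s t).Adj (f a) (f b)

/-- The graph obtained from `G` by contracting the vertex `v` into the vertex `u`
(when `uv` is an edge, this is the contraction of that edge). -/
def contractEdge {V : Type*} (G : SimpleGraph V) (u v : V) :
    SimpleGraph {x : V // x ≠ v} where
  Adj a b := a ≠ b ∧ (G.Adj a.1 b.1 ∨ ((a.1 = u ∧ G.Adj v b.1) ∨ (b.1 = u ∧ G.Adj v a.1)))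
  symm := by
    refine ⟨?_⟩
    rintro a b ⟨h1, h2⟩
    refine ⟨h1.symm, ?_⟩
    rcases h2 with h | h | h
    · exact Or.inl h.symm
    · exact Or.inr (Or.inr h)
    · exact Or.inr (Or.inl h)
  loopless := by refine ⟨?_⟩; rintro a ⟨h, _⟩; exact h rfl

/-- Any graph isomorphic to a subgraph of the book `B_{s,t}` remains
isomorphic to a subgraph of `B_{s,t}` after any single elementary operation (vertex
deletion, edge deletion, or edge contraction); consequently, every minor of `B_{s,t}`
is isomorphic to a subgraph of `B_{s,t}`. -/
theorem book_minor_closed (s t : ℕ) :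
    (∀ (U : Type) (H : SimpleGraph U), IsSubBook s t H →
      (∀ v : U, IsSubBook s t (H.induce {x | x ≠ v})) ∧
      (∀ e : Sym2 U, IsSubBook s t (H.deleteEdges {e})) ∧
      (∀ u v : U, H.Adj u v → IsSubBook s t (contractEdge H u v))) ∧
    (∀ (U : Type) (H : SimpleGraph U), (book s t).HasMinor H → IsSubBook s t H) := by
  classical
  constructor
  · rintro U H ⟨f, hf⟩
    refine ⟨?_, ?_, ?_⟩
    · intro v
      refine ⟨⟨fun x => f x.1, fun a b h => Subtype.ext (f.injective h)⟩, ?_⟩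
      intro a b hab
      exact hf a.1 b.1 hab
    · intro e
      refine ⟨f, fun a b hab => hf a b ?_⟩
      exact ((SimpleGraph.deleteEdges_adj).mp hab).1
    · intro u v huv
      have hb : (book s t).Adj (f u) (f v) := hf u v huv
      obtain ⟨hne, hleft⟩ := hb
      obtain ⟨w, hw1, hw2⟩ : ∃ w, (w = u ∨ w = v) ∧ (f w).isLeft := by
        rcases hleft with h | h
        · exact ⟨u, Or.inl rfl, h⟩
        · exact ⟨v, Or.inr rfl, h⟩
      set g : {x : U // x ≠ v} → Fin s ⊕ Fin t :=
        fun a => if a.1 = u then f w else f a.1 with hg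
      have ginj : Function.Injective g := by
        intro a b h
        simp only [hg] at h
        split_ifs at h with h1 h2 h2
        · exact Subtype.ext (h1.trans h2.symm)
        · exfalso
          have := f.injective h
          rcases hw1 with rfl | rfl
          · exact h2 this.symm
          · exact b.2 this.symm
        · exfalso
          have := f.injective h
          rcases hw1 with rfl | rfl
          · exact h1 this
          · exact a.2 this
        · exact Subtype.ext (f.injective h)
      refine ⟨⟨g, ginj⟩, ?_⟩
      rintro a b ⟨hne', hcases⟩
      refine ⟨fun h => hne' (ginj h), ?_⟩
      rcases hcases with h | ⟨ha, h⟩ | ⟨hb, h⟩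
      · have hor := (hf _ _ h).2
        by_cases hau : a.1 = u
        · left; simp [hg, hau, hw2]
        · by_cases hbu : b.1 = u
          · right; simp [hg, hbu, hw2]
          · simpa [hg, hau, hbu] using hor
      · left; simp [hg, ha, hw2]
      · right; simp [hg, hb, hw2]
  · rintro U H ⟨f, hne, -, hdisj, hadj⟩
    have pick : ∀ u : U, ∃ x ∈ f u, ((∃ y ∈ f u, y.isLeft) → x.isLeft) := by
      intro u
      by_cases h : ∃ y ∈ f u, y.isLeft
      · obtain ⟨y, hy, hyl⟩ := h; exact ⟨y, hy, fun _ => hyl⟩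
      · obtain ⟨x, hx⟩ := hne u; exact ⟨x, hx, fun h' => absurd h' h⟩
    choose g hg1 hg2 using pick
    have ginj : Function.Injective g := by
      intro a b h
      by_contra hne'
      have hmem : g a ∈ f b := h ▸ hg1 b
      exact Set.disjoint_left.mp (hdisj hne') (hg1 a) hmem
    refine ⟨⟨g, ginj⟩, ?_⟩
    intro a b hab
    obtain ⟨v₁, hv₁, v₂, hv₂, hnev, hl⟩ := hadj hab
    refine ⟨fun h => hab.ne (ginj h), ?_⟩
    rcases hl with h | h
    · left; exact hg2 a ⟨v₁, hv₁, h⟩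
    · right; exact hg2 b ⟨v₂, hv₂, h⟩
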